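/- Let H be a real Hilbert space, let {α_n} be a sequence of real numbers with 0 < a ≤ α_n ≤ b < 1 for all n ≥ 0, and let {x_n} and {y_n} be sequences in H such that limsup_{n→∞} ‖x_n‖ ≤ c, limsup_{n→∞} ‖y_n‖ ≤ c, and lim_{n→∞} ‖α_n x_n + (1 − α_n) y_n‖ = c for some c > 0. Then lim_{n→∞} ‖x_n − y_n‖ = 0. -/

import Mathlib

open Filter Topology

lemma schu_key {H : Type*} [NormedAddCommGroup H] [InnerProductSpace ℝ H]
    (α : ℝ) (u v : H) :
    ‖α • u + (1 - α) • v‖ ^ 2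
      = α * ‖u‖ ^ 2 + (1 - α) * ‖v‖ ^ 2 - α * (1 - α) * ‖u - v‖ ^ 2 := by
  have h : ∀ z : H, ‖z‖ ^ 2 = inner ℝ z z := fun z =>
    (real_inner_self_eq_norm_sq z).symm
  simp only [h, inner_add_left, inner_add_right, inner_sub_left, inner_sub_right,
    real_inner_smul_left, real_inner_smul_right, real_inner_comm u v]
  ring

/-- Schu's lemma: if `limsup ‖xₙ‖ ≤ c`, `limsup ‖yₙ‖ ≤ c` and
`‖αₙ xₙ + (1 - αₙ) yₙ‖ → c` with `0 < a ≤ αₙ ≤ b < 1`, then `‖xₙ - yₙ‖ → 0`. -/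
theorem stmt_16 {H : Type*} [NormedAddCommGroup H] [InnerProductSpace ℝ H]
    (a b : ℝ) (ha : 0 < a) (hb : b < 1)
    (αn : ℕ → ℝ) (hαn : ∀ n, a ≤ αn n ∧ αn n ≤ b)
    (x y : ℕ → H) (c : ℝ) (hc : 0 < c)
    (hx : limsup (fun n => (‖x n‖ : EReal)) atTop ≤ (c : EReal))
    (hy : limsup (fun n => (‖y n‖ : EReal)) atTop ≤ (c : EReal))
    (hconv : Tendsto (fun n => ‖αn n • x n + (1 - αn n) • y n‖) atTop (𝓝 c)) :
    Tendsto (fun n => ‖x n - y n‖) atTop (𝓝 0) := by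
  obtain ⟨K, hKdef⟩ : ∃ K : ℝ, K = a * (1 - b) := ⟨_, rfl⟩
  have hK : 0 < K := hKdef ▸ mul_pos ha (by linarith)
  have hx' : ∀ ε > (0:ℝ), ∀ᶠ n in atTop, ‖x n‖ < c + ε := by
    intro ε hε
    have h1 : limsup (fun n => (‖x n‖ : EReal)) atTop < ((c + ε : ℝ) : EReal) :=
      lt_of_le_of_lt hx (by exact_mod_cast (lt_add_of_pos_right c hε))
    filter_upwards [eventually_lt_of_limsup_lt h1] with n hn
    exact_mod_cast hn
  have hy' : ∀ ε > (0:ℝ), ∀ᶠ n in atTop, ‖y n‖ < c + ε := by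
    intro ε hε
    have h1 : limsup (fun n => (‖y n‖ : EReal)) atTop < ((c + ε : ℝ) : EReal) :=
      lt_of_le_of_lt hy (by exact_mod_cast (lt_add_of_pos_right c hε))
    filter_upwards [eventually_lt_of_limsup_lt h1] with n hn
    exact_mod_cast hn
  have hsq : Tendsto (fun n => ‖αn n • x n + (1 - αn n) • y n‖ ^ 2) atTop (𝓝 (c ^ 2)) :=
    hconv.pow 2
  have hf : Tendsto (fun n => ‖x n - y n‖ ^ 2) atTop (𝓝 0) := by
    rw [tendsto_order]
    constructor
    · intro ε hε
      exact Eventually.of_forall fun n => lt_of_lt_of_le hε (sq_nonneg _)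
    · intro ε hε
      obtain ⟨δ, hδdef⟩ : ∃ δ : ℝ, δ = min 1 (ε * K / (2 * (2 * c + 2))) := ⟨_, rfl⟩
      have hδ : 0 < δ := by
        rw [hδdef]
        apply lt_min one_pos
        positivity
      have hδ1 : δ ≤ 1 := hδdef ▸ min_le_left _ _
      have hδ2 : δ ≤ ε * K / (2 * (2 * c + 2)) := hδdef ▸ min_le_right _ _
      have hzev : ∀ᶠ n in atTop, c ^ 2 - δ < ‖αn n • x n + (1 - αn n) • y n‖ ^ 2 :=
        hsq.eventually (eventually_gt_nhds (by linarith))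
      filter_upwards [hx' δ hδ, hy' δ hδ, hzev] with n hxn hyn hzn
      have hα := hαn n
      have hα1 : 0 < αn n := lt_of_lt_of_le ha hα.1
      have hα2 : αn n < 1 := lt_of_le_of_lt hα.2 hb
      have hkey := schu_key (αn n) (x n) (y n)
      have hxn2 : ‖x n‖ ^ 2 < (c + δ) ^ 2 := by
        have := norm_nonneg (x n); nlinarith
      have hyn2 : ‖y n‖ ^ 2 < (c + δ) ^ 2 := by
        have := norm_nonneg (y n); nlinarith
      have hKle : K ≤ αn n * (1 - αn n) := by nlinarith [hα.1, hα.2]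
      have hmain : αn n * (1 - αn n) * ‖x n - y n‖ ^ 2 < (c + δ) ^ 2 - (c ^ 2 - δ) := by
        nlinarith [hα1, hα2]
      have hsmall : (c + δ) ^ 2 - (c ^ 2 - δ) < ε * K := by
        have h2c : 0 < 2 * (2 * c + 2) := by linarith
        have hd : δ * (2 * (2 * c + 2)) ≤ ε * K := by
          calc δ * (2 * (2 * c + 2))
              ≤ ε * K / (2 * (2 * c + 2)) * (2 * (2 * c + 2)) :=
                mul_le_mul_of_nonneg_right hδ2 (le_of_lt h2c)
            _ = ε * K := div_mul_cancel₀ _ (ne_of_gt h2c)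
        nlinarith [hδ, hδ1, hc]
      have hfsq : K * ‖x n - y n‖ ^ 2 < ε * K := by
        have hnn : 0 ≤ ‖x n - y n‖ ^ 2 := sq_nonneg _
        calc K * ‖x n - y n‖ ^ 2 ≤ αn n * (1 - αn n) * ‖x n - y n‖ ^ 2 :=
              mul_le_mul_of_nonneg_right hKle hnn
          _ < (c + δ) ^ 2 - (c ^ 2 - δ) := hmain
          _ < ε * K := hsmall
      have h := hfsq
      rw [mul_comm ε K] at h
      exact (mul_lt_mul_iff_right₀ hK).mp h
  have := hf.sqrt
  simpa [Real.sqrt_sq (norm_nonneg _)] using this
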